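/- arXiv:2102.13079 — 3 statements merged into one kernel-verified Lean document; each statement's English description precedes it below -/
import Mathlib

section
/- Let (X, Y) be bivariate normal with mean 0, unit variances, and correlation ρ ∈ [−1, 1], and let τ ~ Uniform(0, 2π) be independent. Then E[cos(γX + τ) cos(γY + τ)] = (1/2) e^{−γ²(1 − ρ)} for any γ > 0. -/
open MeasureTheory ProbabilityTheory Real Set

/-- The uniform distribution on (0, 2π). -/
noncomputable def uniform02pi : Measure ℝ :=
  (ENNReal.ofReal (2 * π))⁻¹ • volume.restrict (Set.Ioo 0 (2 * π))

open Complex NNReal ENNReal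


lemma cexp_int (a t : ℝ) :
    ∫ x : ℝ, Complex.exp ((a + t * x) * Complex.I) ∂(gaussianReal 0 1) =
      Complex.exp (a * Complex.I) * Real.exp (-t ^ 2 / 2) := by
  have h1 : (1 : ℝ≥0) ≠ 0 := one_ne_zero
  rw [gaussianReal_of_var_ne_zero 0 h1]
  have hpdf : (gaussianPDF 0 1) = fun x => ((gaussianPDFReal 0 1 x).toNNReal : ℝ≥0∞) := rfl
  rw [hpdf, integral_withDensity_eq_integral_smul
    ((measurable_gaussianPDFReal 0 1).real_toNNReal)]
  have hgp : ∀ x : ℝ, ((gaussianPDFReal 0 1 x).toNNReal : ℝ) = gaussianPDFReal 0 1 x := fun x =>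
    Real.coe_toNNReal _ (gaussianPDFReal_nonneg 0 1 x)
  simp only [NNReal.smul_def, hgp]
  have key : ∀ x : ℝ, gaussianPDFReal 0 1 x • Complex.exp ((a + t * x) * Complex.I) =
      ((Real.sqrt (2 * π))⁻¹ : ℂ) * Complex.exp (a * Complex.I) *
        (Complex.exp (Complex.I * t * x) * Complex.exp (-(1/2 : ℂ) * x ^ 2)) := by
    intro x
    rw [gaussianPDFReal, Complex.real_smul]
    push_cast
    rw [mul_assoc, mul_assoc, mul_assoc, ← Complex.exp_add, ← Complex.exp_add, ← Complex.exp_add,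
      mul_one]
    congr 1
    ring
  simp_rw [key]
  rw [integral_const_mul, fourierIntegral_gaussian (by norm_num) (t : ℂ)]
  have h2 : ((π : ℂ) / (1/2)) ^ (1/2 : ℂ) = (Real.sqrt (2 * π) : ℂ) := by
    have e : ((π : ℂ) / (1/2)) = ((2 * π : ℝ) : ℂ) := by push_cast; ring
    rw [e, show (1/2 : ℂ) = ((1/2 : ℝ) : ℂ) by norm_num,
      ← Complex.ofReal_cpow (by positivity), Real.sqrt_eq_rpow]
  rw [h2]
  have h3 : Complex.exp (-(t:ℂ) ^ 2 / (4 * (1/2))) = (Real.exp (-t ^ 2 / 2) : ℂ) := by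
    push_cast
    congr 1
    ring
  rw [h3]
  have h4 : ((Real.sqrt (2 * π) : ℝ) : ℂ) ≠ 0 := by
    exact_mod_cast Real.sqrt_ne_zero'.mpr (by positivity)
  calc ((Real.sqrt (2 * π) : ℝ) : ℂ)⁻¹ * Complex.exp (a * Complex.I) *
        (((Real.sqrt (2 * π) : ℝ) : ℂ) * (Real.exp (-t ^ 2 / 2) : ℂ))
      = (((Real.sqrt (2 * π) : ℝ) : ℂ)⁻¹ * ((Real.sqrt (2 * π) : ℝ) : ℂ)) *
        (Complex.exp (a * Complex.I) * (Real.exp (-t ^ 2 / 2) : ℂ)) := by ring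
    _ = _ := by rw [inv_mul_cancel₀ h4, one_mul]

lemma gauss_cos (a t : ℝ) :
    ∫ x, Real.cos (a + t * x) ∂(gaussianReal 0 1) = Real.cos a * Real.exp (-t ^ 2 / 2) := by
  have hi : Integrable (fun x : ℝ => Complex.exp ((a + t * x) * Complex.I)) (gaussianReal 0 1) := by
    apply Integrable.mono' (integrable_const 1)
    · exact (Complex.continuous_exp.comp (by continuity)).aestronglyMeasurable
    · filter_upwards with x
      rw [Complex.norm_exp]
      simp
  have h := integral_re hi
  rw [cexp_int] at h
  have hl : ∀ x : ℝ, RCLike.re (Complex.exp ((a + t * x) * Complex.I)) = Real.cos (a + t * x) := by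
    intro x
    rw [RCLike.re_to_complex, show ((a : ℂ) + t * x) = ((a + t * x : ℝ) : ℂ) by push_cast; ring,
      Complex.exp_ofReal_mul_I_re]
  simp_rw [hl] at h
  rw [h, RCLike.re_to_complex, Complex.mul_re, Complex.ofReal_re, Complex.ofReal_im,
    Complex.exp_ofReal_mul_I_re]
  ring

instance : IsProbabilityMeasure uniform02pi := by
  constructor
  rw [uniform02pi, Measure.smul_apply, Measure.restrict_apply_univ, Real.volume_Ioo, sub_zero,
    smul_eq_mul, ENNReal.inv_mul_cancel]
  · exact (ENNReal.ofReal_pos.mpr (by positivity)).ne'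
  · exact ENNReal.ofReal_ne_top

lemma unif_cos (a b : ℝ) :
    ∫ τ, Real.cos (a + τ) * Real.cos (b + τ) ∂uniform02pi = (1 / 2) * Real.cos (a - b) := by
  rw [uniform02pi, integral_smul_measure]
  have h0 : (0 : ℝ) ≤ 2 * π := by positivity
  have hIoo : ∫ τ in Set.Ioo (0:ℝ) (2*π), Real.cos (a + τ) * Real.cos (b + τ) =
      ∫ τ in (0:ℝ)..(2*π), Real.cos (a + τ) * Real.cos (b + τ) := by
    rw [intervalIntegral.integral_of_le h0, integral_Ioc_eq_integral_Ioo]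
  have key : ∫ τ in (0:ℝ)..(2*π), Real.cos (a + τ) * Real.cos (b + τ) = π * Real.cos (a - b) := by
    have base : ∀ u v : ℝ, Real.cos u * Real.cos v = (Real.cos (u - v) + Real.cos (u + v)) / 2 := by
      intro u v
      rw [Real.cos_add, Real.cos_sub]
      ring
    have hc : ∀ τ : ℝ, Real.cos (a + τ) * Real.cos (b + τ) =
        (Real.cos (a - b) + Real.cos (2 * τ + (a + b))) / 2 := by
      intro τ
      rw [base, show (a + τ) - (b + τ) = a - b by ring,
        show (a + τ) + (b + τ) = 2 * τ + (a + b) by ring]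
    simp_rw [hc]
    rw [intervalIntegral.integral_div, intervalIntegral.integral_add
      (intervalIntegrable_const)
      ((by continuity : Continuous fun τ : ℝ => Real.cos (2 * τ + (a + b))).intervalIntegrable _ _),
      intervalIntegral.integral_const,
      intervalIntegral.integral_comp_mul_add Real.cos two_ne_zero (a + b),
      integral_cos,
      show 2 * (2 * π) + (a + b) = (a + b) + 2 * π + 2 * π by ring,
      Real.sin_add_two_pi, Real.sin_add_two_pi,
      show 2 * 0 + (a + b) = a + b by ring, sub_self, smul_zero]
    simp
    ring
  rw [hIoo, key, ENNReal.toReal_inv, ENNReal.toReal_ofReal h0, smul_eq_mul]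
  have hπ : π ≠ 0 := Real.pi_ne_zero
  field_simp

/-- for (X, Y) bivariate normal with mean 0, unit variances and correlation
ρ ∈ [−1,1] (realized as X, Y = ρX + √(1−ρ²)Z with X, Z independent standard normals), and
τ ~ Uniform(0,2π) independent, E[cos(γX + τ) cos(γY + τ)] = (1/2) e^{−γ²(1 − ρ)}. -/
theorem stmt5 (γ ρ : ℝ) (hγ : 0 < γ) (hρ : ρ ∈ Set.Icc (-1 : ℝ) 1) :
    ∫ p : (ℝ × ℝ) × ℝ,
        Real.cos (γ * p.1.1 + p.2) *
        Real.cos (γ * (ρ * p.1.1 + Real.sqrt (1 - ρ ^ 2) * p.1.2) + p.2)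
        ∂(((gaussianReal 0 1).prod (gaussianReal 0 1)).prod uniform02pi) =
      (1 / 2) * Real.exp (-γ ^ 2 * (1 - ρ)) := by
  obtain ⟨hρ1, hρ2⟩ := hρ
  set s := Real.sqrt (1 - ρ ^ 2) with hs
  have hs2 : s ^ 2 = 1 - ρ ^ 2 := Real.sq_sqrt (by nlinarith)
  set c := γ * (1 - ρ) with hcdef
  set d := -(γ * s) with hddef
  have hcont : Continuous (fun p : (ℝ × ℝ) × ℝ =>
      Real.cos (γ * p.1.1 + p.2) * Real.cos (γ * (ρ * p.1.1 + s * p.1.2) + p.2)) := by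
    fun_prop
  have hint : Integrable (fun p : (ℝ × ℝ) × ℝ =>
      Real.cos (γ * p.1.1 + p.2) * Real.cos (γ * (ρ * p.1.1 + s * p.1.2) + p.2))
      (((gaussianReal 0 1).prod (gaussianReal 0 1)).prod uniform02pi) := by
    apply Integrable.mono' (integrable_const 1) hcont.aestronglyMeasurable
    filter_upwards with p
    rw [Real.norm_eq_abs, abs_mul]
    exact mul_le_one₀ (Real.abs_cos_le_one _) (abs_nonneg _) (Real.abs_cos_le_one _)
  rw [MeasureTheory.integral_prod _ hint]
  have step1 : ∀ q : ℝ × ℝ, ∫ τ, Real.cos (γ * q.1 + τ) *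
      Real.cos (γ * (ρ * q.1 + s * q.2) + τ) ∂uniform02pi =
      (1 / 2) * Real.cos (c * q.1 + d * q.2) := by
    intro q
    rw [unif_cos]
    congr 1
    rw [hcdef, hddef]
    ring
  simp_rw [step1]
  have hint2 : Integrable (fun q : ℝ × ℝ => (1 / 2) * Real.cos (c * q.1 + d * q.2))
      ((gaussianReal 0 1).prod (gaussianReal 0 1)) := by
    apply Integrable.mono' (integrable_const 1)
    · exact (by fun_prop : Continuous fun q : ℝ × ℝ =>
        (1 / 2) * Real.cos (c * q.1 + d * q.2)).aestronglyMeasurable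
    · filter_upwards with q
      rw [Real.norm_eq_abs, abs_mul]
      have := Real.abs_cos_le_one (c * q.1 + d * q.2)
      rw [_root_.abs_of_nonneg (by norm_num : (0:ℝ) ≤ (1/2 : ℝ))]
      nlinarith [abs_nonneg (Real.cos (c * q.1 + d * q.2))]
  rw [MeasureTheory.integral_prod _ hint2]
  have step2 : ∀ x : ℝ, ∫ z, (1 / 2) * Real.cos (c * x + d * z) ∂(gaussianReal 0 1) =
      (1 / 2) * Real.exp (-d ^ 2 / 2) * Real.cos (c * x) := by
    intro x
    rw [integral_const_mul, gauss_cos]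
    ring
  simp_rw [step2]
  have step3 : ∀ x : ℝ, Real.cos (c * x) = Real.cos (0 + c * x) := by
    intro x; rw [zero_add]
  simp_rw [step3]
  rw [integral_const_mul, gauss_cos, Real.cos_zero, one_mul, mul_assoc, ← Real.exp_add]
  congr 1
  rw [Real.exp_eq_exp, hddef, hcdef]
  linear_combination (-γ ^ 2 / 2) * hs2
end

section
/- Let u, v be unit vectors with ρ = u^T v, and let ẑ = 2 sign(cos(γw^Tu + τ)) sign(cos(γw^Tv + τ)) where the signs arise from 1-bit stochastic rounding with borders {−1, 0, 1}. Then the 1-bit StocQ kernel estimator K̂ built from a single such feature satisfies E[K̂] = K(u,v) = e^{−γ²(1−ρ)} and Var[K̂] = 4 − K(u,v)². -/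
open MeasureTheory ProbabilityTheory Real Set
open scoped NNReal ENNReal

/-- The uniform distribution on (0, 1), driving the stochastic rounding. -/
noncomputable def uniform01 : Measure ℝ := volume.restrict (Set.Ioo (0 : ℝ) 1)

/-- 1-bit stochastic rounding of z ∈ [−1,1] with borders {−1,0,1}: using an auxiliary
uniform variable ξ, returns 1 with probability (z+1)/2 and −1 otherwise. -/
noncomputable def stocQ1bit (z ξ : ℝ) : ℝ := if ξ ≤ (z + 1) / 2 then 1 else -1





instance : IsProbabilityMeasure uniform01 := by
  constructor
  simp [uniform01, Real.volume_Ioo]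

instance inst_s11 : IsProbabilityMeasure uniform02pi := by
  constructor
  have h2π : (0:ℝ) < 2 * π := by positivity
  simp only [uniform02pi, Measure.smul_apply, Measure.restrict_apply_univ, Real.volume_Ioo,
    sub_zero, smul_eq_mul]
  rw [ENNReal.inv_mul_cancel (by simpa using h2π) ENNReal.ofReal_ne_top]

lemma measurable_stocQ : Measurable (fun p : ℝ × ℝ => stocQ1bit p.1 p.2) := by
  unfold stocQ1bit
  exact Measurable.ite (measurableSet_le measurable_snd (by fun_prop)) measurable_const
    measurable_const

lemma abs_stocQ (z ξ : ℝ) : |stocQ1bit z ξ| = 1 := by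
  unfold stocQ1bit; split <;> simp

lemma sq_stocQ (z ξ : ℝ) : stocQ1bit z ξ ^ 2 = 1 := by
  unfold stocQ1bit; split <;> norm_num

lemma integral_stocQ (z : ℝ) (h1 : -1 ≤ z) (h2 : z ≤ 1) :
    ∫ ξ, stocQ1bit z ξ ∂uniform01 = z := by
  set c := (z + 1) / 2 with hc
  have hc0 : 0 ≤ c := by simp [hc]; linarith
  have hc1 : c ≤ 1 := by rw [hc]; linarith
  have hf : ∀ ξ, stocQ1bit z ξ = Set.indicator (Iic c) (fun _ => (2:ℝ)) ξ + (-1) := by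
    intro ξ
    by_cases h : ξ ≤ c
    · rw [Set.indicator_of_mem (mem_Iic.mpr h)]
      simp [stocQ1bit, ← hc, h]
      norm_num
    · rw [Set.indicator_of_notMem (by simpa using h)]
      simp [stocQ1bit, ← hc, h]
  have hmeas : volume (Iic c ∩ Ioo 0 1) = ENNReal.ofReal c := by
    rcases eq_or_lt_of_le hc1 with h | h
    · have : Iic c ∩ Ioo 0 1 = Ioo 0 1 := by
        rw [Set.inter_eq_right]
        intro x hx; exact le_of_lt (lt_of_lt_of_le hx.2 (le_of_eq h.symm))
      rw [this, Real.volume_Ioo, ← h]; norm_num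
    · have : Iic c ∩ Ioo 0 1 = Ioc 0 c := by
        ext x
        constructor
        · rintro ⟨hx1, hx2, _⟩; exact ⟨hx2, hx1⟩
        · rintro ⟨hx1, hx2⟩; exact ⟨hx2, hx1, lt_of_le_of_lt hx2 h⟩
      rw [this, Real.volume_Ioc]; norm_num
  simp_rw [hf]
  rw [integral_add ((integrable_const (2:ℝ)).indicator measurableSet_Iic) (integrable_const _),
    integral_indicator_const _ measurableSet_Iic, integral_const]
  simp only [measureReal_def, uniform01, Measure.restrict_apply measurableSet_Iic, hmeas,
    Measure.restrict_apply_univ, Real.volume_Ioo]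
  rw [ENNReal.toReal_ofReal hc0]
  norm_num [hc]

lemma gaussian_cexp (a : ℝ) :
    ∫ x : ℝ, Complex.exp (Complex.I * a * x) ∂(gaussianReal 0 1) =
      Complex.exp (-(a ^ 2) / 2) := by
  rw [gaussianReal_of_var_ne_zero 0 one_ne_zero]
  have hd : gaussianPDF 0 1 = fun x => ((Real.toNNReal (gaussianPDFReal 0 1 x) : ℝ≥0) : ℝ≥0∞) :=
    rfl
  rw [hd, integral_withDensity_eq_integral_smul (measurable_gaussianPDFReal 0 1).real_toNNReal]
  have hpt : ∀ x : ℝ, (Real.toNNReal (gaussianPDFReal 0 1 x)) • Complex.exp (Complex.I * a * x) =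
      ((√(2 * π))⁻¹ : ℂ) * Complex.exp ((-(1/2) : ℂ) * x ^ 2 + (a * Complex.I) * x + 0) := by
    intro x
    rw [NNReal.smul_def, Real.coe_toNNReal _ (gaussianPDFReal_nonneg 0 1 x), gaussianPDFReal]
    simp only [NNReal.coe_one, mul_one, sub_zero]
    rw [Complex.real_smul, Complex.ofReal_mul, Complex.ofReal_exp, Complex.ofReal_inv,
      mul_assoc, ← Complex.exp_add]
    congr 1
    push_cast
    ring
  simp_rw [hpt]
  rw [integral_const_mul, integral_cexp_quadratic (by norm_num : ((-(1/2) : ℂ)).re < 0) _ _]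
  have h2π : (0:ℝ) ≤ 2 * π := by positivity
  have hpow : ((π : ℂ) / -(-(1/2))) ^ (1/2 : ℂ) = ((√(2 * π) : ℝ) : ℂ) := by
    have : ((π : ℂ) / -(-(1/2))) = ((2 * π : ℝ) : ℂ) := by push_cast; ring
    rw [this, show (1/2 : ℂ) = ((1/2 : ℝ) : ℂ) by norm_num, ← Complex.ofReal_cpow h2π]
    norm_num [Real.sqrt_eq_rpow]
  rw [hpow]
  have hsqrt : ((√(2 * π) : ℝ) : ℂ) ≠ 0 := by
    simp only [ne_eq, Complex.ofReal_eq_zero]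
    positivity
  rw [← mul_assoc, inv_mul_cancel₀ hsqrt, one_mul]
  congr 1
  have : (a : ℂ) * Complex.I * ((a : ℂ) * Complex.I) = -(a^2 : ℂ) := by
    rw [show (a:ℂ) * Complex.I * ((a:ℂ) * Complex.I) = (a:ℂ)^2 * (Complex.I^2) by ring,
      Complex.I_sq]; ring
  rw [zero_sub, pow_two]
  rw [this]
  ring

lemma integrable_bdd {α E : Type*} [MeasurableSpace α] [NormedAddCommGroup E] {μ : Measure α}
    [IsFiniteMeasure μ] {f : α → E} (hm : AEStronglyMeasurable f μ) {C : ℝ}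
    (h : ∀ x, ‖f x‖ ≤ C) : Integrable f μ :=
  (integrable_const C).mono' hm (Filter.Eventually.of_forall h)

lemma pi_gaussian_cos (d : ℕ) (a : Fin d → ℝ) :
    ∫ w : Fin d → ℝ, Real.cos (∑ i, a i * w i)
        ∂(Measure.pi fun _ : Fin d => gaussianReal 0 1) =
      rexp (-(∑ i, a i ^ 2) / 2) := by
  set μ := Measure.pi fun _ : Fin d => gaussianReal 0 1 with hμ
  have hcont : Continuous (fun w : Fin d → ℝ =>
      Complex.exp (Complex.I * ((∑ i, a i * w i : ℝ) : ℂ))) := by fun_prop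
  have hint : Integrable (fun w : Fin d → ℝ =>
      Complex.exp (Complex.I * ((∑ i, a i * w i : ℝ) : ℂ))) μ :=
    integrable_bdd hcont.aestronglyMeasurable
      (fun w => by rw [mul_comm]; exact le_of_eq (Complex.norm_exp_ofReal_mul_I _))
  have hC : ∫ w : Fin d → ℝ, Complex.exp (Complex.I * ((∑ i, a i * w i : ℝ) : ℂ)) ∂μ =
      Complex.exp (((-(∑ i, a i ^ 2) / 2 : ℝ) : ℂ)) := by
    have hprod : (fun w : Fin d → ℝ => Complex.exp (Complex.I * ((∑ i, a i * w i : ℝ) : ℂ))) =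
        fun w => ∏ i, Complex.exp (Complex.I * a i * w i) := by
      funext w
      rw [← Complex.exp_sum]
      congr 1
      push_cast
      rw [Finset.mul_sum]
      exact Finset.sum_congr rfl fun i _ => by ring
    rw [hprod]
    letI : MeasureSpace ℝ := ⟨gaussianReal 0 1⟩
    haveI : SigmaFinite (volume : Measure ℝ) := inferInstanceAs (SigmaFinite (gaussianReal 0 1))
    rw [hμ]
    have key := MeasureTheory.integral_fintype_prod_eq_prod (ι := Fin d)
      (fun i (x : ℝ) => Complex.exp (Complex.I * a i * x)) (μ := fun _ => gaussianReal 0 1)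
    rw [key]
    simp_rw [gaussian_cexp]
    rw [← Complex.exp_sum]
    congr 1
    push_cast
    rw [← Finset.sum_div]
    congr 1
    simp
  have hre : ∀ w : Fin d → ℝ, Real.cos (∑ i, a i * w i) =
      (Complex.exp (Complex.I * ((∑ i, a i * w i : ℝ) : ℂ))).re := by
    intro w; rw [mul_comm, Complex.exp_ofReal_mul_I_re]
  simp_rw [hre]
  have := Complex.reCLM.integral_comp_comm hint
  simp only [Complex.reCLM_apply] at this
  rw [this, hC, ← Complex.ofReal_exp, Complex.ofReal_re]



lemma uniform02pi_cos (c : ℝ) : ∫ τ, Real.cos (c + 2 * τ) ∂uniform02pi = 0 := by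
  rw [uniform02pi, integral_smul_measure]
  have h0 : ∫ τ in Set.Ioo (0:ℝ) (2*π), Real.cos (c + 2*τ) = 0 := by
    rw [← integral_Ioc_eq_integral_Ioo,
      ← intervalIntegral.integral_of_le (by positivity : (0:ℝ) ≤ 2*π)]
    simp_rw [show ∀ τ : ℝ, c + 2*τ = 2*τ + c from fun τ => by ring]
    rw [intervalIntegral.integral_comp_mul_add Real.cos two_ne_zero c, integral_cos,
      show 2*(2*π)+c = (2*0+c + 2*π) + 2*π by ring, Real.sin_add_two_pi, Real.sin_add_two_pi]
    simp
  rw [h0, smul_zero]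

lemma exp_coscos (d : ℕ) (u v : Fin d → ℝ) (γ ρ : ℝ)
    (hu : ∑ i, u i ^ 2 = 1) (hv : ∑ i, v i ^ 2 = 1) (hρ : ρ = ∑ i, u i * v i) :
    ∫ p : (Fin d → ℝ) × ℝ,
        2 * Real.cos (γ * (∑ i, p.1 i * u i) + p.2) * Real.cos (γ * (∑ i, p.1 i * v i) + p.2)
        ∂((Measure.pi fun _ : Fin d => gaussianReal 0 1).prod uniform02pi) =
      rexp (-γ ^ 2 * (1 - ρ)) := by
  set μg := Measure.pi fun _ : Fin d => gaussianReal 0 1 with hμg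
  have hpt : ∀ p : (Fin d → ℝ) × ℝ,
      2 * Real.cos (γ * (∑ i, p.1 i * u i) + p.2) * Real.cos (γ * (∑ i, p.1 i * v i) + p.2) =
        Real.cos (∑ i, (γ * (u i - v i)) * p.1 i) +
          Real.cos ((γ * (∑ i, p.1 i * u i) + γ * (∑ i, p.1 i * v i)) + 2 * p.2) := by
    rintro ⟨w, τ⟩
    have h1 : (∑ i, (γ * (u i - v i)) * w i) =
        (γ * (∑ i, w i * u i) + τ) - (γ * (∑ i, w i * v i) + τ) := by
      have e1 : ∀ i ∈ Finset.univ, (γ * (u i - v i)) * w i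
          = γ * (w i * u i) - γ * (w i * v i) := fun i _ => by ring
      rw [Finset.sum_congr rfl e1, Finset.sum_sub_distrib, ← Finset.mul_sum, ← Finset.mul_sum]
      ring
    have h2 : (γ * (∑ i, w i * u i) + γ * (∑ i, w i * v i)) + 2 * τ =
        (γ * (∑ i, w i * u i) + τ) + (γ * (∑ i, w i * v i) + τ) := by ring
    have key : ∀ A B : ℝ, 2 * Real.cos A * Real.cos B = Real.cos (A - B) + Real.cos (A + B) := by
      intro A B; rw [Real.cos_sub, Real.cos_add]; ring
    simp only
    rw [key, h1, h2]
  have hcont1 : Continuous fun p : (Fin d → ℝ) × ℝ =>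
      Real.cos (∑ i, (γ * (u i - v i)) * p.1 i) := by fun_prop
  have hcont2 : Continuous fun p : (Fin d → ℝ) × ℝ =>
      Real.cos ((γ * (∑ i, p.1 i * u i) + γ * (∑ i, p.1 i * v i)) + 2 * p.2) := by fun_prop
  have hint1 : Integrable (fun p : (Fin d → ℝ) × ℝ =>
      Real.cos (∑ i, (γ * (u i - v i)) * p.1 i)) (μg.prod uniform02pi) :=
    integrable_bdd hcont1.aestronglyMeasurable
      (fun p => by rw [Real.norm_eq_abs]; exact Real.abs_cos_le_one _)
  have hint2 : Integrable (fun p : (Fin d → ℝ) × ℝ =>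
      Real.cos ((γ * (∑ i, p.1 i * u i) + γ * (∑ i, p.1 i * v i)) + 2 * p.2))
      (μg.prod uniform02pi) :=
    integrable_bdd hcont2.aestronglyMeasurable
      (fun p => by rw [Real.norm_eq_abs]; exact Real.abs_cos_le_one _)
  simp_rw [hpt]
  rw [integral_add hint1 hint2]
  have hI1 : ∫ p : (Fin d → ℝ) × ℝ, Real.cos (∑ i, (γ * (u i - v i)) * p.1 i)
      ∂(μg.prod uniform02pi) = rexp (-γ ^ 2 * (1 - ρ)) := by
    rw [integral_prod _ hint1]
    simp only [integral_const, probReal_univ, one_smul]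
    rw [pi_gaussian_cos d (fun i => γ * (u i - v i))]
    congr 1
    have hs : ∑ i, (γ * (u i - v i)) ^ 2 =
        γ ^ 2 * ((∑ i, u i ^ 2) - 2 * (∑ i, u i * v i) + (∑ i, v i ^ 2)) := by
      have e1 : ∀ i ∈ Finset.univ, (γ * (u i - v i)) ^ 2 =
          γ ^ 2 * u i ^ 2 - 2 * γ ^ 2 * (u i * v i) + γ ^ 2 * v i ^ 2 := fun i _ => by ring
      rw [Finset.sum_congr rfl e1]
      rw [Finset.sum_add_distrib, Finset.sum_sub_distrib, ← Finset.mul_sum, ← Finset.mul_sum,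
        ← Finset.mul_sum]
      ring
    rw [hs, hu, hv, ← hρ]
    ring
  have hI2 : ∫ p : (Fin d → ℝ) × ℝ,
      Real.cos ((γ * (∑ i, p.1 i * u i) + γ * (∑ i, p.1 i * v i)) + 2 * p.2)
      ∂(μg.prod uniform02pi) = 0 := by
    rw [integral_prod _ hint2]
    simp_rw [uniform02pi_cos]
    simp
  rw [hI1, hI2, add_zero]

/-- the 1-bit StocQ kernel estimator K̂ = 2 Q(z_u) Q(z_v) built from one
random Fourier feature satisfies E[K̂] = e^{−γ²(1−ρ)} and Var[K̂] = 4 − e^{−γ²(1−ρ)}². -/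
theorem stmt11 (d : ℕ) (u v : Fin d → ℝ) (γ ρ : ℝ) (hγ : 0 < γ)
    (hu : ∑ i, u i ^ 2 = 1) (hv : ∑ i, v i ^ 2 = 1)
    (hρ : ρ = ∑ i, u i * v i) :
    (∫ p : ((Fin d → ℝ) × ℝ) × (ℝ × ℝ),
        2 * stocQ1bit (Real.cos (γ * (∑ i, p.1.1 i * u i) + p.1.2)) p.2.1 *
            stocQ1bit (Real.cos (γ * (∑ i, p.1.1 i * v i) + p.1.2)) p.2.2
        ∂(((Measure.pi fun _ : Fin d => gaussianReal 0 1).prod uniform02pi).prod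
            (uniform01.prod uniform01)) =
      Real.exp (-γ ^ 2 * (1 - ρ))) ∧
    (∫ p : ((Fin d → ℝ) × ℝ) × (ℝ × ℝ),
        (2 * stocQ1bit (Real.cos (γ * (∑ i, p.1.1 i * u i) + p.1.2)) p.2.1 *
             stocQ1bit (Real.cos (γ * (∑ i, p.1.1 i * v i) + p.1.2)) p.2.2) ^ 2
        ∂(((Measure.pi fun _ : Fin d => gaussianReal 0 1).prod uniform02pi).prod
            (uniform01.prod uniform01))) -
      (Real.exp (-γ ^ 2 * (1 - ρ))) ^ 2 =
      4 - (Real.exp (-γ ^ 2 * (1 - ρ))) ^ 2 := by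
  have mcos_u : Measurable fun p1 : (Fin d → ℝ) × ℝ =>
      Real.cos (γ * (∑ i, p1.1 i * u i) + p1.2) := by fun_prop
  have mcos_v : Measurable fun p1 : (Fin d → ℝ) × ℝ =>
      Real.cos (γ * (∑ i, p1.1 i * v i) + p1.2) := by fun_prop
  have mF : Measurable fun p : ((Fin d → ℝ) × ℝ) × (ℝ × ℝ) =>
      2 * stocQ1bit (Real.cos (γ * (∑ i, p.1.1 i * u i) + p.1.2)) p.2.1 *
        stocQ1bit (Real.cos (γ * (∑ i, p.1.1 i * v i) + p.1.2)) p.2.2 := by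
    refine Measurable.mul (Measurable.mul measurable_const ?_) ?_
    · exact measurable_stocQ.comp ((mcos_u.comp measurable_fst).prodMk measurable_snd.fst)
    · exact measurable_stocQ.comp ((mcos_v.comp measurable_fst).prodMk measurable_snd.snd)
  have hFbd : ∀ p : ((Fin d → ℝ) × ℝ) × (ℝ × ℝ),
      ‖2 * stocQ1bit (Real.cos (γ * (∑ i, p.1.1 i * u i) + p.1.2)) p.2.1 *
        stocQ1bit (Real.cos (γ * (∑ i, p.1.1 i * v i) + p.1.2)) p.2.2‖ ≤ 2 := by
    intro p
    rw [Real.norm_eq_abs, abs_mul, abs_mul, abs_stocQ, abs_stocQ, abs_two]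
    norm_num
  have hFint : Integrable (fun p : ((Fin d → ℝ) × ℝ) × (ℝ × ℝ) =>
      2 * stocQ1bit (Real.cos (γ * (∑ i, p.1.1 i * u i) + p.1.2)) p.2.1 *
        stocQ1bit (Real.cos (γ * (∑ i, p.1.1 i * v i) + p.1.2)) p.2.2)
      (((Measure.pi fun _ : Fin d => gaussianReal 0 1).prod uniform02pi).prod
        (uniform01.prod uniform01)) :=
    integrable_bdd mF.aestronglyMeasurable hFbd
  have hinner : ∀ a b : ℝ, -1 ≤ a → a ≤ 1 → -1 ≤ b → b ≤ 1 →
      ∫ q : ℝ × ℝ, 2 * stocQ1bit a q.1 * stocQ1bit b q.2 ∂(uniform01.prod uniform01) =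
        2 * a * b := by
    intro a b ha1 ha2 hb1 hb2
    have e : (fun q : ℝ × ℝ => 2 * stocQ1bit a q.1 * stocQ1bit b q.2) =
        fun q : ℝ × ℝ => 2 * (stocQ1bit a q.1 * stocQ1bit b q.2) := by
      funext q; ring
    rw [e, integral_const_mul, integral_prod_mul (stocQ1bit a) (stocQ1bit b),
      integral_stocQ a ha1 ha2, integral_stocQ b hb1 hb2]
    ring
  have hE : ∫ p : ((Fin d → ℝ) × ℝ) × (ℝ × ℝ),
      2 * stocQ1bit (Real.cos (γ * (∑ i, p.1.1 i * u i) + p.1.2)) p.2.1 *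
        stocQ1bit (Real.cos (γ * (∑ i, p.1.1 i * v i) + p.1.2)) p.2.2
      ∂(((Measure.pi fun _ : Fin d => gaussianReal 0 1).prod uniform02pi).prod
        (uniform01.prod uniform01)) = Real.exp (-γ ^ 2 * (1 - ρ)) := by
    rw [integral_prod _ hFint]
    have hin : ∀ p1 : (Fin d → ℝ) × ℝ,
        ∫ q : ℝ × ℝ, 2 * stocQ1bit (Real.cos (γ * (∑ i, p1.1 i * u i) + p1.2)) q.1 *
          stocQ1bit (Real.cos (γ * (∑ i, p1.1 i * v i) + p1.2)) q.2
          ∂(uniform01.prod uniform01) =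
        2 * Real.cos (γ * (∑ i, p1.1 i * u i) + p1.2) *
          Real.cos (γ * (∑ i, p1.1 i * v i) + p1.2) := fun p1 =>
      hinner _ _ (Real.neg_one_le_cos _) (Real.cos_le_one _)
        (Real.neg_one_le_cos _) (Real.cos_le_one _)
    simp_rw [hin]
    exact exp_coscos d u v γ ρ hu hv hρ
  refine ⟨hE, ?_⟩
  have hsq : ∀ p : ((Fin d → ℝ) × ℝ) × (ℝ × ℝ),
      (2 * stocQ1bit (Real.cos (γ * (∑ i, p.1.1 i * u i) + p.1.2)) p.2.1 *
        stocQ1bit (Real.cos (γ * (∑ i, p.1.1 i * v i) + p.1.2)) p.2.2) ^ 2 = 4 := by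
    intro p
    rw [mul_pow, mul_pow, sq_stocQ, sq_stocQ]
    norm_num
  have h4 : ∫ p : ((Fin d → ℝ) × ℝ) × (ℝ × ℝ),
      (2 * stocQ1bit (Real.cos (γ * (∑ i, p.1.1 i * u i) + p.1.2)) p.2.1 *
        stocQ1bit (Real.cos (γ * (∑ i, p.1.1 i * v i) + p.1.2)) p.2.2) ^ 2
      ∂(((Measure.pi fun _ : Fin d => gaussianReal 0 1).prod uniform02pi).prod
        (uniform01.prod uniform01)) = 4 := by
    rw [integral_congr_ae (Filter.Eventually.of_forall hsq), integral_const, probReal_univ]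
    simp
  rw [h4]
end

section
/- Let (X, Y) be bivariate standard normal with correlation ρ, τ ~ Uniform(0, 2π) independent, s_x = γX + τ, s_y = γY + τ, z_x = cos(s_x), z_y = cos(s_y). For twice-differentiable bounded functions g₁, g₂: [−1,1] → ℝ, the derivative of E[g₁(z_x) g₂(z_y)] with respect to ρ equals γ² E[g₁′(z_x) sin(s_x) g₂′(z_y) sin(s_y)]. -/
open MeasureTheory ProbabilityTheory Real Set Filter

namespace Stmt16Aux

/-! ### Gaussian density facts -/

lemma gpdf_meas : Measurable fun x => (gaussianPDFReal 0 1 x).toNNReal :=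
  (measurable_gaussianPDFReal 0 1).real_toNNReal

lemma gaussianReal_eq_wd :
    gaussianReal 0 1 = volume.withDensity fun x => ((gaussianPDFReal 0 1 x).toNNReal : ENNReal) := by
  rw [gaussianReal_of_var_ne_zero _ one_ne_zero]; rfl

lemma integral_gaussian_eq (f : ℝ → ℝ) :
    ∫ x, f x ∂(gaussianReal 0 1) = ∫ x, gaussianPDFReal 0 1 x * f x := by
  rw [gaussianReal_eq_wd, integral_withDensity_eq_integral_smul gpdf_meas f]
  congr 1; ext x
  simp [NNReal.smul_def, Real.coe_toNNReal _ (gaussianPDFReal_nonneg 0 1 x)]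

lemma integrable_gaussian_iff (f : ℝ → ℝ) :
    Integrable f (gaussianReal 0 1) ↔ Integrable (fun x => gaussianPDFReal 0 1 x * f x) volume := by
  rw [gaussianReal_eq_wd, integrable_withDensity_iff_integrable_smul gpdf_meas]
  constructor <;> intro h <;> refine h.congr (Filter.Eventually.of_forall fun x => ?_) <;>
    simp [NNReal.smul_def, Real.coe_toNNReal _ (gaussianPDFReal_nonneg 0 1 x)]

lemma gpdf_formula (x : ℝ) :
    gaussianPDFReal 0 1 x = (Real.sqrt (2 * π))⁻¹ * Real.exp (-(1/2) * x ^ 2) := by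
  rw [gaussianPDFReal]; norm_num; ring_nf; simp

lemma gpdf_hasDerivAt (x : ℝ) :
    HasDerivAt (gaussianPDFReal 0 1) (-x * gaussianPDFReal 0 1 x) x := by
  have h1 : HasDerivAt (fun x : ℝ => -(1/2) * x ^ 2) (-x) x := by
    simpa using ((hasDerivAt_pow 2 x).const_mul (-(1/2) : ℝ))
  have h2 := (h1.exp).const_mul ((Real.sqrt (2 * π))⁻¹)
  have heq : gaussianPDFReal 0 1
      = fun x => (Real.sqrt (2 * π))⁻¹ * Real.exp (-(1/2) * x ^ 2) :=
    funext fun y => gpdf_formula y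
  rw [heq]
  refine h2.congr_deriv ?_
  ring

lemma integrable_abs_mul_gpdf : Integrable (fun x => |x| * gaussianPDFReal 0 1 x) volume := by
  have h := (integrable_mul_exp_neg_mul_sq (b := 1/2) (by norm_num)).abs.const_mul
    ((Real.sqrt (2 * π))⁻¹)
  refine h.congr (Filter.Eventually.of_forall fun x => ?_)
  simp only [gpdf_formula, abs_mul, abs_of_nonneg (Real.exp_nonneg _)]
  ring

lemma gpdf_tendsto_atTop : Tendsto (gaussianPDFReal 0 1) atTop (nhds 0) := by
  have h : Tendsto (fun x : ℝ => (Real.sqrt (2 * π))⁻¹ * Real.exp (-(1/2) * x ^ 2)) atTop (nhds 0) := by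
    rw [show (0:ℝ) = (Real.sqrt (2 * π))⁻¹ * 0 by ring]
    refine Tendsto.const_mul _ (Real.tendsto_exp_atBot.comp ?_)
    apply Tendsto.const_mul_atTop_of_neg (by norm_num : (-(1/2) : ℝ) < 0)
    exact tendsto_pow_atTop (by norm_num)
  exact h.congr fun x => (gpdf_formula x).symm

lemma gpdf_tendsto_atBot : Tendsto (gaussianPDFReal 0 1) atBot (nhds 0) := by
  have h := gpdf_tendsto_atTop.comp (tendsto_neg_atBot_atTop)
  refine h.congr fun x => ?_
  simp only [Function.comp]
  rw [gpdf_formula, gpdf_formula]; ring_nf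

lemma gpdf_cont : Continuous (gaussianPDFReal 0 1) := by
  have h : Continuous fun x : ℝ => (Real.sqrt (2 * π))⁻¹ * Real.exp (-(1/2) * x ^ 2) := by
    continuity
  exact h.congr fun x => (gpdf_formula x).symm

/-! ### Stein's lemma -/

lemma stein1 (h h' : ℝ → ℝ) (C : ℝ) (hc' : Continuous h')
    (hb : ∀ x, |h x| ≤ C) (hb' : ∀ x, |h' x| ≤ C)
    (hd : ∀ x, HasDerivAt h (h' x) x) :
    ∫ x, x * h x ∂(gaussianReal 0 1) = ∫ x, h' x ∂(gaussianReal 0 1) := by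
  set φ := gaussianPDFReal 0 1 with hφdef
  have hφc : Continuous φ := gpdf_cont
  have hφnn : ∀ x, 0 ≤ φ x := gaussianPDFReal_nonneg 0 1
  have hch : Continuous h := continuous_iff_continuousAt.2 fun x => (hd x).continuousAt
  set u := fun x => h x * φ x with hudef
  have hud : ∀ x, HasDerivAt u (h' x * φ x - x * (h x * φ x)) x := by
    intro x
    have := (hd x).mul (gpdf_hasDerivAt x)
    refine this.congr_deriv ?_; ring
  have hint1 : Integrable (fun x => h' x * φ x) volume := by
    refine ((integrable_gaussianPDFReal 0 1).const_mul C).mono'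
      (hc'.mul hφc).aestronglyMeasurable (Eventually.of_forall fun x => ?_)
    rw [norm_mul, norm_of_nonneg (hφnn x)]
    exact mul_le_mul_of_nonneg_right (hb' x) (hφnn x)
  have hint2 : Integrable (fun x => x * (h x * φ x)) volume := by
    refine (integrable_abs_mul_gpdf.const_mul C).mono'
      (continuous_id.mul (hch.mul hφc)).aestronglyMeasurable (Eventually.of_forall fun x => ?_)
    have he : ‖x * (h x * φ x)‖ = |x| * (|h x| * φ x) := by
      rw [norm_mul, norm_mul, norm_of_nonneg (hφnn x)]; rfl
    rw [he]
    calc |x| * (|h x| * φ x) ≤ |x| * (C * φ x) :=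
          mul_le_mul_of_nonneg_left (mul_le_mul_of_nonneg_right (hb x) (hφnn x)) (abs_nonneg x)
      _ = C * (|x| * φ x) := by ring
  have huint : Integrable (fun x => h' x * φ x - x * (h x * φ x)) volume := hint1.sub hint2
  have hu0top : Tendsto u atTop (nhds 0) := by
    have hb2 : Tendsto (fun x => C * φ x) atTop (nhds 0) := by
      simpa using gpdf_tendsto_atTop.const_mul C
    refine squeeze_zero_norm (fun x => ?_) hb2
    rw [norm_mul, norm_of_nonneg (hφnn x)]
    exact mul_le_mul_of_nonneg_right (hb x) (hφnn x)
  have hu0bot : Tendsto u atBot (nhds 0) := by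
    have hb2 : Tendsto (fun x => C * φ x) atBot (nhds 0) := by
      simpa using gpdf_tendsto_atBot.const_mul C
    refine squeeze_zero_norm (fun x => ?_) hb2
    rw [norm_mul, norm_of_nonneg (hφnn x)]
    exact mul_le_mul_of_nonneg_right (hb x) (hφnn x)
  have hIic : ∫ x in Iic (0:ℝ), (h' x * φ x - x * (h x * φ x)) = u 0 - 0 :=
    integral_Iic_of_hasDerivAt_of_tendsto' (fun x _ => hud x) huint.integrableOn hu0bot
  have hIoi : ∫ x in Ioi (0:ℝ), (h' x * φ x - x * (h x * φ x)) = 0 - u 0 :=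
    integral_Ioi_of_hasDerivAt_of_tendsto' (fun x _ => hud x) huint.integrableOn hu0top
  have hsum : ∫ x, (h' x * φ x - x * (h x * φ x)) = 0 := by
    rw [← integral_add_compl measurableSet_Iic huint, compl_Iic, hIic, hIoi]; ring
  rw [integral_sub hint1 hint2] at hsum
  rw [integral_gaussian_eq, integral_gaussian_eq]
  have e1 : ∫ x, φ x * (x * h x) = ∫ x, x * (h x * φ x) := by
    congr 1; ext x; ring
  have e2 : ∫ x, φ x * h' x = ∫ x, h' x * φ x := by
    congr 1; ext x; ring
  rw [e1, e2]; linarith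

lemma integrable_abs_gaussian : Integrable (fun x => |x|) (gaussianReal 0 1) := by
  rw [integrable_gaussian_iff]
  exact integrable_abs_mul_gpdf.congr (Eventually.of_forall fun x => by ring_nf)

lemma integrable_abs_fst' {α : Type*} [MeasurableSpace α] (ν : Measure α) [IsProbabilityMeasure ν] :
    Integrable (fun p : ℝ × α => |p.1|) ((gaussianReal 0 1).prod ν) := by
  have h : Integrable (fun x => |x|) (Measure.map Prod.fst ((gaussianReal 0 1).prod ν)) := by
    rw [Measure.map_fst_prod]
    simpa using integrable_abs_gaussian
  exact h.comp_measurable measurable_fst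

lemma stein_prod (ν : Measure (ℝ × ℝ)) [IsProbabilityMeasure ν]
    (h h' : ℝ → ℝ × ℝ → ℝ) (C : ℝ)
    (hc : Continuous fun p : ℝ × (ℝ × ℝ) => h p.1 p.2)
    (hc' : Continuous fun p : ℝ × (ℝ × ℝ) => h' p.1 p.2)
    (hb : ∀ x w, |h x w| ≤ C) (hb' : ∀ x w, |h' x w| ≤ C)
    (hd : ∀ w x, HasDerivAt (fun x => h x w) (h' x w) x) :
    ∫ p : ℝ × (ℝ × ℝ), p.1 * h p.1 p.2 ∂((gaussianReal 0 1).prod ν)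
      = ∫ p : ℝ × (ℝ × ℝ), h' p.1 p.2 ∂((gaussianReal 0 1).prod ν) := by
  set G := gaussianReal 0 1 with hG
  have hint : Integrable (fun p : ℝ × (ℝ × ℝ) => p.1 * h p.1 p.2) (G.prod ν) := by
    refine ((integrable_abs_fst' ν).const_mul C).mono'
      (continuous_fst.mul hc).aestronglyMeasurable (Eventually.of_forall fun p => ?_)
    rw [norm_mul]
    calc ‖p.1‖ * ‖h p.1 p.2‖ ≤ |p.1| * C :=
          mul_le_mul_of_nonneg_left (hb p.1 p.2) (abs_nonneg _)
      _ = C * |p.1| := by ring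
  have hint' : Integrable (fun p : ℝ × (ℝ × ℝ) => h' p.1 p.2) (G.prod ν) :=
    (integrable_const C).mono' hc'.aestronglyMeasurable
      (Eventually.of_forall fun p => hb' p.1 p.2)
  have h1 : ∫ p : ℝ × (ℝ × ℝ), p.1 * h p.1 p.2 ∂(G.prod ν)
      = ∫ x, ∫ w, x * h x w ∂ν ∂G := integral_prod _ hint
  have h2 : ∫ x, ∫ w, x * h x w ∂ν ∂G = ∫ w, ∫ x, x * h x w ∂G ∂ν :=
    integral_integral_swap hint
  have h3 : ∀ w, ∫ x, x * h x w ∂G = ∫ x, h' x w ∂G := fun w =>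
    stein1 (fun x => h x w) (fun x => h' x w) C
      (hc'.comp (continuous_id.prodMk continuous_const))
      (fun x => hb x w) (fun x => hb' x w) (hd w)
  have h4 : ∫ w, ∫ x, h' x w ∂G ∂ν = ∫ x, ∫ w, h' x w ∂ν ∂G :=
    (integral_integral_swap hint').symm
  rw [h1, h2]
  simp_rw [h3]
  rw [h4, ← integral_prod _ hint']

/-! ### The measure and reordering equivalences -/

noncomputable def mu0 : Measure ((ℝ × ℝ) × ℝ) :=
  ((gaussianReal 0 1).prod (gaussianReal 0 1)).prod uniform02pi

instance : IsProbabilityMeasure uniform02pi := by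
  constructor
  rw [uniform02pi, Measure.smul_apply, Measure.restrict_apply MeasurableSet.univ,
    Set.univ_inter, Real.volume_Ioo, smul_eq_mul, sub_zero]
  exact ENNReal.inv_mul_cancel (by simp [Real.pi_pos]) ENNReal.ofReal_ne_top

instance : IsProbabilityMeasure mu0 := by rw [mu0]; infer_instance

noncomputable def eX : ((ℝ × ℝ) × ℝ) ≃ᵐ (ℝ × (ℝ × ℝ)) := MeasurableEquiv.prodAssoc

lemma eX_mp : MeasurePreserving eX mu0
    ((gaussianReal 0 1).prod ((gaussianReal 0 1).prod uniform02pi)) :=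
  measurePreserving_prodAssoc _ _ _

noncomputable def eZ : ((ℝ × ℝ) × ℝ) ≃ᵐ (ℝ × (ℝ × ℝ)) where
  toEquiv :=
    { toFun := fun p => (p.1.2, (p.1.1, p.2)),
      invFun := fun q => ((q.2.1, q.1), q.2.2),
      left_inv := fun _ => rfl, right_inv := fun _ => rfl }
  measurable_toFun :=
    (measurable_snd.comp measurable_fst).prodMk
      ((measurable_fst.comp measurable_fst).prodMk measurable_snd)
  measurable_invFun :=
    ((measurable_fst.comp measurable_snd).prodMk measurable_fst).prodMk
      (measurable_snd.comp measurable_snd)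

lemma eZ_mp : MeasurePreserving eZ mu0
    ((gaussianReal 0 1).prod ((gaussianReal 0 1).prod uniform02pi)) := by
  have h1 : MeasurePreserving (Prod.map (Prod.swap : ℝ × ℝ → ℝ × ℝ) (id : ℝ → ℝ)) mu0 mu0 := by
    rw [mu0]
    exact MeasurePreserving.prod Measure.measurePreserving_swap (MeasurePreserving.id _)
  have h2 := (measurePreserving_prodAssoc (gaussianReal 0 1) (gaussianReal 0 1) uniform02pi).comp h1
  have heq : (⇑MeasurableEquiv.prodAssoc ∘ Prod.map (Prod.swap : ℝ × ℝ → ℝ × ℝ) (id : ℝ → ℝ))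
      = ⇑eZ := funext fun p => rfl
  rw [mu0]
  rw [mu0] at h2
  rwa [heq] at h2

lemma int_abs_x : Integrable (fun p : (ℝ × ℝ) × ℝ => |p.1.1|) mu0 := by
  have h1 : Integrable (fun q : ℝ × ℝ => |q.1|) ((gaussianReal 0 1).prod (gaussianReal 0 1)) :=
    integrable_abs_fst' _
  have h : Integrable (fun q : ℝ × ℝ => |q.1|) (Measure.map Prod.fst mu0) := by
    rw [mu0, Measure.map_fst_prod]
    simpa using h1
  exact h.comp_measurable measurable_fst

lemma int_abs_z : Integrable (fun p : (ℝ × ℝ) × ℝ => |p.1.2|) mu0 := by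
  have h : Integrable (fun q : ℝ × (ℝ × ℝ) => |q.1|)
      ((gaussianReal 0 1).prod ((gaussianReal 0 1).prod uniform02pi)) :=
    integrable_abs_fst' _
  exact (eZ_mp.integrable_comp_emb eZ.measurableEmbedding).mpr h

lemma integrable_of_bounded {f : ((ℝ × ℝ) × ℝ) → ℝ} (C : ℝ) (hc : Continuous f)
    (hb : ∀ p, |f p| ≤ C) : Integrable f mu0 :=
  (integrable_const C).mono' hc.aestronglyMeasurable (Eventually.of_forall hb)

/-! ### The key functions -/

noncomputable def Dg (g₂ : ℝ → ℝ) (s : ℝ) : ℝ :=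
  deriv (deriv g₂) (Real.cos s) * Real.sin s * Real.sin s - deriv g₂ (Real.cos s) * Real.cos s

noncomputable def Af (γ ρ b : ℝ) (g₁ g₂ : ℝ → ℝ) (p : (ℝ × ℝ) × ℝ) : ℝ :=
  g₁ (Real.cos (γ * p.1.1 + p.2)) *
    (deriv g₂ (Real.cos (γ * (ρ * p.1.1 + b * p.1.2) + p.2)) *
      (-Real.sin (γ * (ρ * p.1.1 + b * p.1.2) + p.2)))

noncomputable def Tf (γ ρ b : ℝ) (g₁ g₂ : ℝ → ℝ) (p : (ℝ × ℝ) × ℝ) : ℝ :=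
  deriv g₁ (Real.cos (γ * p.1.1 + p.2)) * Real.sin (γ * p.1.1 + p.2) *
    (deriv g₂ (Real.cos (γ * (ρ * p.1.1 + b * p.1.2) + p.2)) *
      Real.sin (γ * (ρ * p.1.1 + b * p.1.2) + p.2))

noncomputable def Bf (γ ρ b : ℝ) (g₁ g₂ : ℝ → ℝ) (p : (ℝ × ℝ) × ℝ) : ℝ :=
  g₁ (Real.cos (γ * p.1.1 + p.2)) * Dg g₂ (γ * (ρ * p.1.1 + b * p.1.2) + p.2)

/-! ### Derivative computations -/

lemma hasDerivAt_sqrt_one_sub_sq {r : ℝ} (hr : 0 < 1 - r ^ 2) :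
    HasDerivAt (fun r => Real.sqrt (1 - r ^ 2)) (-r / Real.sqrt (1 - r ^ 2)) r := by
  have h1 : HasDerivAt (fun x : ℝ => 1 - x ^ 2) (-(2 * r ^ 1)) r := (hasDerivAt_pow 2 r).const_sub 1
  have h2 := h1.sqrt (ne_of_gt hr)
  convert h2 using 1
  have hs : Real.sqrt (1 - r ^ 2) ≠ 0 := ne_of_gt (Real.sqrt_pos.mpr hr)
  rw [pow_one]
  field_simp

lemma hasDerivAt_Q {g₂ : ℝ → ℝ}
    (hg₂'d : ∀ y, HasDerivAt (deriv g₂) (deriv (deriv g₂) y) y) (s : ℝ) :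
    HasDerivAt (fun s => deriv g₂ (Real.cos s) * (-Real.sin s)) (Dg g₂ s) s := by
  have h1 := (hg₂'d (Real.cos s)).comp s (Real.hasDerivAt_cos s)
  have h2 := (Real.hasDerivAt_sin s).neg
  have h3 := h1.mul h2
  refine h3.congr_deriv ?_
  simp only [Dg, Function.comp, Pi.neg_apply]
  ring

lemma hasDerivAt_integrand (γ : ℝ) (g₁ g₂ : ℝ → ℝ)
    (hg₂d : ∀ y, HasDerivAt g₂ (deriv g₂ y) y) (p : (ℝ × ℝ) × ℝ) {r : ℝ} (hr : 0 < 1 - r ^ 2) :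
    HasDerivAt
      (fun r => g₁ (Real.cos (γ * p.1.1 + p.2)) *
        g₂ (Real.cos (γ * (r * p.1.1 + Real.sqrt (1 - r ^ 2) * p.1.2) + p.2)))
      (γ * (p.1.1 + (-r / Real.sqrt (1 - r ^ 2)) * p.1.2) *
        Af γ r (Real.sqrt (1 - r ^ 2)) g₁ g₂ p) r := by
  have hinner : HasDerivAt
      (fun r => γ * (r * p.1.1 + Real.sqrt (1 - r ^ 2) * p.1.2) + p.2)
      (γ * (p.1.1 + (-r / Real.sqrt (1 - r ^ 2)) * p.1.2)) r := by
    have h1 : HasDerivAt (fun r : ℝ => r * p.1.1) p.1.1 r := by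
      simpa using (hasDerivAt_id r).mul_const p.1.1
    have h2 := (hasDerivAt_sqrt_one_sub_sq hr).mul_const p.1.2
    exact ((h1.add h2).const_mul γ).add_const p.2
  have hcos := (Real.hasDerivAt_cos _).comp r hinner
  have hg2 := (hg₂d _).comp r hcos
  have hfin := hg2.const_mul (g₁ (Real.cos (γ * p.1.1 + p.2)))
  refine hfin.congr_deriv ?_
  simp only [Af, Function.comp]
  ring

lemma hasDerivAt_hX (γ ρ b : ℝ) (g₁ g₂ : ℝ → ℝ)
    (hg₁d : ∀ y, HasDerivAt g₁ (deriv g₁ y) y)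
    (hg₂'d : ∀ y, HasDerivAt (deriv g₂) (deriv (deriv g₂) y) y)
    (w : ℝ × ℝ) (x : ℝ) :
    HasDerivAt (fun x => Af γ ρ b g₁ g₂ ((x, w.1), w.2))
      (γ * Tf γ ρ b g₁ g₂ ((x, w.1), w.2) + (γ * ρ) * Bf γ ρ b g₁ g₂ ((x, w.1), w.2)) x := by
  have hsx : HasDerivAt (fun x : ℝ => γ * x + w.2) γ x := by
    simpa using ((hasDerivAt_id x).const_mul γ).add_const w.2
  have hsy : HasDerivAt (fun x : ℝ => γ * (ρ * x + b * w.1) + w.2) (γ * ρ) x := by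
    have h1 : HasDerivAt (fun x : ℝ => ρ * x + b * w.1) ρ x := by
      simpa using ((hasDerivAt_id x).const_mul ρ).add_const (b * w.1)
    simpa using (h1.const_mul γ).add_const w.2
  have hP1 : HasDerivAt (fun x => g₁ (Real.cos (γ * x + w.2)))
      (deriv g₁ (Real.cos (γ * x + w.2)) * (-Real.sin (γ * x + w.2) * γ)) x :=
    (hg₁d _).comp x ((Real.hasDerivAt_cos _).comp x hsx)
  have hP2 : HasDerivAt
      (fun x => deriv g₂ (Real.cos (γ * (ρ * x + b * w.1) + w.2)) *
        (-Real.sin (γ * (ρ * x + b * w.1) + w.2)))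
      (Dg g₂ (γ * (ρ * x + b * w.1) + w.2) * (γ * ρ)) x :=
    (hasDerivAt_Q hg₂'d _).comp x hsy
  have h3 := hP1.mul hP2
  refine h3.congr_deriv ?_
  simp only [Tf, Bf, Af, Dg, Function.comp]
  ring

lemma hasDerivAt_hZ (γ ρ b : ℝ) (g₁ g₂ : ℝ → ℝ)
    (hg₂'d : ∀ y, HasDerivAt (deriv g₂) (deriv (deriv g₂) y) y)
    (w : ℝ × ℝ) (z : ℝ) :
    HasDerivAt (fun z => Af γ ρ b g₁ g₂ ((w.1, z), w.2))
      ((γ * b) * Bf γ ρ b g₁ g₂ ((w.1, z), w.2)) z := by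
  have hsy : HasDerivAt (fun z : ℝ => γ * (ρ * w.1 + b * z) + w.2) (γ * b) z := by
    have h1 : HasDerivAt (fun z : ℝ => ρ * w.1 + b * z) b z := by
      simpa using ((hasDerivAt_id z).const_mul b).const_add (ρ * w.1)
    simpa using (h1.const_mul γ).add_const w.2
  have hP2 : HasDerivAt
      (fun z => deriv g₂ (Real.cos (γ * (ρ * w.1 + b * z) + w.2)) *
        (-Real.sin (γ * (ρ * w.1 + b * z) + w.2)))
      (Dg g₂ (γ * (ρ * w.1 + b * z) + w.2) * (γ * b)) z :=
    (hasDerivAt_Q hg₂'d _).comp z hsy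
  have h3 := hP2.const_mul (g₁ (Real.cos (γ * w.1 + w.2)))
  refine h3.congr_deriv ?_
  simp only [Bf, Af, Dg, Function.comp]
  ring

end Stmt16Aux

/-- for (X,Y) bivariate standard normal with correlation ρ (realized via
Y = ρX + √(1−ρ²)Z), τ ~ Uniform(0,2π), s_x = γX + τ, s_y = γY + τ, z_x = cos s_x,
z_y = cos s_y, and twice-differentiable bounded g₁, g₂,
d/dρ E[g₁(z_x) g₂(z_y)] = γ² E[g₁′(z_x) sin(s_x) g₂′(z_y) sin(s_y)]. -/
theorem stmt16 (γ ρ : ℝ) (hγ : 0 < γ) (hρ : ρ ∈ Set.Ioo (-1 : ℝ) 1)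
    (g₁ g₂ : ℝ → ℝ) (h₁ : ContDiff ℝ 2 g₁) (h₂ : ContDiff ℝ 2 g₂)
    (hb₁ : ∃ C, ∀ x, |g₁ x| ≤ C) (hb₂ : ∃ C, ∀ x, |g₂ x| ≤ C) :
    HasDerivAt
      (fun r => ∫ p : (ℝ × ℝ) × ℝ,
        g₁ (Real.cos (γ * p.1.1 + p.2)) *
          g₂ (Real.cos (γ * (r * p.1.1 + Real.sqrt (1 - r ^ 2) * p.1.2) + p.2))
        ∂(((gaussianReal 0 1).prod (gaussianReal 0 1)).prod uniform02pi))
      (γ ^ 2 * ∫ p : (ℝ × ℝ) × ℝ,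
        deriv g₁ (Real.cos (γ * p.1.1 + p.2)) * Real.sin (γ * p.1.1 + p.2) *
          (deriv g₂ (Real.cos (γ * (ρ * p.1.1 + Real.sqrt (1 - ρ ^ 2) * p.1.2) + p.2)) *
            Real.sin (γ * (ρ * p.1.1 + Real.sqrt (1 - ρ ^ 2) * p.1.2) + p.2))
        ∂(((gaussianReal 0 1).prod (gaussianReal 0 1)).prod uniform02pi))
      ρ := by
  open Stmt16Aux in
  obtain ⟨hρ1, hρ2⟩ := hρ
  obtain ⟨C₁, hC₁⟩ := hb₁
  obtain ⟨C₂, hC₂⟩ := hb₂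
  have hC₁0 : 0 ≤ C₁ := le_trans (abs_nonneg _) (hC₁ 0)
  have hC₂0 : 0 ≤ C₂ := le_trans (abs_nonneg _) (hC₂ 0)
  -- regularity
  have hg₁c : Continuous g₁ := h₁.continuous
  have hg₂c : Continuous g₂ := h₂.continuous
  have hg₁d : ∀ y, HasDerivAt g₁ (deriv g₁ y) y := fun y =>
    ((h₁.differentiable (by norm_num)) y).hasDerivAt
  have hg₂d : ∀ y, HasDerivAt g₂ (deriv g₂ y) y := fun y =>
    ((h₂.differentiable (by norm_num)) y).hasDerivAt
  have hd₁' : ContDiff ℝ 1 (deriv g₁) := by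
    have h' : ContDiff ℝ (1 + 1) g₁ := by norm_num; exact h₁
    exact (contDiff_succ_iff_deriv.mp h').2.2
  have hd₂' : ContDiff ℝ 1 (deriv g₂) := by
    have h' : ContDiff ℝ (1 + 1) g₂ := by norm_num; exact h₂
    exact (contDiff_succ_iff_deriv.mp h').2.2
  have hg₁'c : Continuous (deriv g₁) := hd₁'.continuous
  have hg₂'c : Continuous (deriv g₂) := hd₂'.continuous
  have hg₂'d : ∀ y, HasDerivAt (deriv g₂) (deriv (deriv g₂) y) y := fun y =>
    ((hd₂'.differentiable one_ne_zero) y).hasDerivAt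
  have hg₂''c : Continuous (deriv (deriv g₂)) := hd₂'.continuous_deriv le_rfl
  -- bounds on compacts
  have hcos_mem : ∀ t : ℝ, Real.cos t ∈ Icc (-1:ℝ) 1 := fun t =>
    ⟨Real.neg_one_le_cos t, Real.cos_le_one t⟩
  obtain ⟨M₁, hM₁⟩ := (isCompact_Icc (a := (-1:ℝ)) (b := 1)).exists_bound_of_continuousOn
    hg₁'c.continuousOn
  obtain ⟨M₂, hM₂⟩ := (isCompact_Icc (a := (-1:ℝ)) (b := 1)).exists_bound_of_continuousOn
    hg₂'c.continuousOn
  obtain ⟨M₃, hM₃⟩ := (isCompact_Icc (a := (-1:ℝ)) (b := 1)).exists_bound_of_continuousOn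
    hg₂''c.continuousOn
  have hg1'b : ∀ t : ℝ, |deriv g₁ (Real.cos t)| ≤ M₁ := fun t => by
    have := hM₁ _ (hcos_mem t); rwa [Real.norm_eq_abs] at this
  have hg2'b : ∀ t : ℝ, |deriv g₂ (Real.cos t)| ≤ M₂ := fun t => by
    have := hM₂ _ (hcos_mem t); rwa [Real.norm_eq_abs] at this
  have hg2''b : ∀ t : ℝ, |deriv (deriv g₂) (Real.cos t)| ≤ M₃ := fun t => by
    have := hM₃ _ (hcos_mem t); rwa [Real.norm_eq_abs] at this
  have hM₁0 : 0 ≤ M₁ := le_trans (abs_nonneg _) (hg1'b 0)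
  have hM₂0 : 0 ≤ M₂ := le_trans (abs_nonneg _) (hg2'b 0)
  have hM₃0 : 0 ≤ M₃ := le_trans (abs_nonneg _) (hg2''b 0)
  have habs : ∀ a b A B : ℝ, |a| ≤ A → |b| ≤ B → |a * b| ≤ A * B := fun a b A B ha hb => by
    rw [abs_mul]
    exact mul_le_mul ha hb (abs_nonneg _) (le_trans (abs_nonneg _) ha)
  have hsin : ∀ t : ℝ, |Real.sin t| ≤ 1 := fun t => Real.abs_sin_le_one t
  -- pointwise bounds
  have hAb : ∀ (r c : ℝ) (p : (ℝ × ℝ) × ℝ), |Af γ r c g₁ g₂ p| ≤ C₁ * M₂ := by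
    intro r c p
    have h2 : |deriv g₂ (Real.cos (γ * (r * p.1.1 + c * p.1.2) + p.2)) *
        (-Real.sin (γ * (r * p.1.1 + c * p.1.2) + p.2))| ≤ M₂ * 1 :=
      habs _ _ _ _ (hg2'b _) (by rw [abs_neg]; exact hsin _)
    have h3 := habs (g₁ (Real.cos (γ * p.1.1 + p.2))) _ C₁ (M₂ * 1) (hC₁ _) h2
    simpa [Af, mul_one] using h3
  have hDb : ∀ s : ℝ, |Dg g₂ s| ≤ M₃ + M₂ := by
    intro s
    rw [Dg, sub_eq_add_neg]
    refine le_trans (abs_add_le _ _) ?_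
    rw [abs_neg]
    have e1 : |deriv (deriv g₂) (Real.cos s) * Real.sin s * Real.sin s| ≤ M₃ * 1 * 1 :=
      habs _ _ _ _ (habs _ _ _ _ (hg2''b s) (hsin s)) (hsin s)
    have e2 : |deriv g₂ (Real.cos s) * Real.cos s| ≤ M₂ * 1 := by
      refine habs _ _ _ _ (hg2'b s) ?_
      rw [← Real.norm_eq_abs]
      exact Real.abs_cos_le_one s
    simp only [mul_one] at e1 e2
    linarith
  have hTb : ∀ p : (ℝ × ℝ) × ℝ, |Tf γ ρ (Real.sqrt (1 - ρ ^ 2)) g₁ g₂ p| ≤ M₁ * M₂ := by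
    intro p
    set b' := Real.sqrt (1 - ρ ^ 2)
    have i1 : |deriv g₁ (Real.cos (γ * p.1.1 + p.2)) * Real.sin (γ * p.1.1 + p.2)| ≤ M₁ * 1 :=
      habs _ _ _ _ (hg1'b _) (hsin _)
    have i2 : |deriv g₂ (Real.cos (γ * (ρ * p.1.1 + b' * p.1.2) + p.2)) *
        Real.sin (γ * (ρ * p.1.1 + b' * p.1.2) + p.2)| ≤ M₂ * 1 :=
      habs _ _ _ _ (hg2'b _) (hsin _)
    have i3 := habs _ _ _ _ i1 i2
    simpa [Tf, mul_one] using i3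
  have hBb : ∀ p : (ℝ × ℝ) × ℝ, |Bf γ ρ (Real.sqrt (1 - ρ ^ 2)) g₁ g₂ p| ≤ C₁ * (M₃ + M₂) := by
    intro p
    exact le_trans (habs _ _ _ _ (hC₁ _) (hDb _)) le_rfl
  -- continuity of the pieces
  have c11 : Continuous fun p : (ℝ × ℝ) × ℝ => p.1.1 := continuous_fst.comp continuous_fst
  have c12 : Continuous fun p : (ℝ × ℝ) × ℝ => p.1.2 := continuous_snd.comp continuous_fst
  have c2 : Continuous fun p : (ℝ × ℝ) × ℝ => p.2 := continuous_snd
  have hsxc : Continuous fun p : (ℝ × ℝ) × ℝ => γ * p.1.1 + p.2 := (continuous_const.mul c11).add c2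
  have hsyc : ∀ r c : ℝ, Continuous fun p : (ℝ × ℝ) × ℝ => γ * (r * p.1.1 + c * p.1.2) + p.2 :=
    fun r c => (continuous_const.mul ((continuous_const.mul c11).add
      (continuous_const.mul c12))).add c2
  have hAc : ∀ r c : ℝ, Continuous (Af γ r c g₁ g₂) := fun r c =>
    (hg₁c.comp (Real.continuous_cos.comp hsxc)).mul
      ((hg₂'c.comp (Real.continuous_cos.comp (hsyc r c))).mul
        ((Real.continuous_sin.comp (hsyc r c)).neg))
  have hDc : Continuous (Dg g₂) := by
    have : Continuous fun s => deriv (deriv g₂) (Real.cos s) * Real.sin s * Real.sin s -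
        deriv g₂ (Real.cos s) * Real.cos s :=
      (((hg₂''c.comp Real.continuous_cos).mul Real.continuous_sin).mul Real.continuous_sin).sub
        ((hg₂'c.comp Real.continuous_cos).mul Real.continuous_cos)
    exact this
  have hTc : ∀ r c : ℝ, Continuous (Tf γ r c g₁ g₂) := fun r c =>
    ((hg₁'c.comp (Real.continuous_cos.comp hsxc)).mul (Real.continuous_sin.comp hsxc)).mul
      ((hg₂'c.comp (Real.continuous_cos.comp (hsyc r c))).mul
        (Real.continuous_sin.comp (hsyc r c)))
  have hBc : ∀ r c : ℝ, Continuous (Bf γ r c g₁ g₂) := fun r c =>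
    (hg₁c.comp (Real.continuous_cos.comp hsxc)).mul (hDc.comp (hsyc r c))
  -- ball parameters
  have hρabs : |ρ| < 1 := abs_lt.mpr ⟨hρ1, hρ2⟩
  set ε := (1 - |ρ|) / 2 with hεdef
  have hε : 0 < ε := by rw [hεdef]; linarith
  set η := (1 + |ρ|) / 2 with hηdef
  have hη1 : η < 1 := by rw [hηdef]; linarith
  have hη0 : 0 ≤ η := by rw [hηdef]; positivity
  have hηsq : 0 < 1 - η ^ 2 := by nlinarith
  have hball : ∀ r ∈ Metric.ball ρ ε, |r| ≤ η ∧ 0 < 1 - r ^ 2 ∧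
      Real.sqrt (1 - η ^ 2) ≤ Real.sqrt (1 - r ^ 2) := by
    intro r hr
    rw [Metric.mem_ball, Real.dist_eq] at hr
    have h1 : |r| ≤ η := by
      calc |r| = |(r - ρ) + ρ| := by ring_nf
        _ ≤ |r - ρ| + |ρ| := abs_add_le _ _
        _ ≤ ε + |ρ| := by linarith
        _ = η := by rw [hεdef, hηdef]; ring
    have h2 : r ^ 2 ≤ η ^ 2 := by nlinarith [abs_nonneg r, sq_abs r]
    exact ⟨h1, by nlinarith, Real.sqrt_le_sqrt (by nlinarith)⟩
  set K := 1 / Real.sqrt (1 - η ^ 2) with hKdef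
  have hsηpos : 0 < Real.sqrt (1 - η ^ 2) := Real.sqrt_pos.mpr hηsq
  have hK0 : 0 ≤ K := by rw [hKdef]; positivity
  have hKval : ∀ r ∈ Metric.ball ρ ε, |(-r / Real.sqrt (1 - r ^ 2))| ≤ K := by
    intro r hr
    obtain ⟨h1, h2, h3⟩ := hball r hr
    rw [abs_div, abs_neg, abs_of_nonneg (Real.sqrt_nonneg _), hKdef]
    exact div_le_div₀ (by norm_num) (le_trans h1 hη1.le) hsηpos h3
  -- derivative under the integral
  set F' : ℝ → ((ℝ × ℝ) × ℝ) → ℝ := fun r p =>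
    γ * (p.1.1 + (-r / Real.sqrt (1 - r ^ 2)) * p.1.2) *
      Af γ r (Real.sqrt (1 - r ^ 2)) g₁ g₂ p with hF'def
  have hboundint : Integrable
      (fun p : (ℝ × ℝ) × ℝ => γ * (|p.1.1| + K * |p.1.2|) * (C₁ * M₂)) mu0 :=
    ((int_abs_x.add (int_abs_z.const_mul K)).const_mul γ).mul_const (C₁ * M₂)
  have h_bound : ∀ p : (ℝ × ℝ) × ℝ, ∀ r ∈ Metric.ball ρ ε,
      ‖F' r p‖ ≤ γ * (|p.1.1| + K * |p.1.2|) * (C₁ * M₂) := by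
    intro p r hr
    rw [hF'def, Real.norm_eq_abs]
    refine habs _ _ _ _ ?_ (hAb _ _ _)
    rw [abs_mul, abs_of_pos hγ]
    refine mul_le_mul_of_nonneg_left ?_ hγ.le
    refine le_trans (abs_add_le _ _) ?_
    have := habs _ _ _ _ (hKval r hr) (le_refl |p.1.2|)
    linarith [this]
  have h_diff : ∀ p : (ℝ × ℝ) × ℝ, ∀ r ∈ Metric.ball ρ ε,
      HasDerivAt (fun r => g₁ (Real.cos (γ * p.1.1 + p.2)) *
        g₂ (Real.cos (γ * (r * p.1.1 + Real.sqrt (1 - r ^ 2) * p.1.2) + p.2))) (F' r p) r := by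
    intro p r hr
    exact hasDerivAt_integrand γ g₁ g₂ hg₂d p (hball r hr).2.1
  have hF_meas : ∀ᶠ r in nhds ρ, AEStronglyMeasurable
      (fun p : (ℝ × ℝ) × ℝ => g₁ (Real.cos (γ * p.1.1 + p.2)) *
        g₂ (Real.cos (γ * (r * p.1.1 + Real.sqrt (1 - r ^ 2) * p.1.2) + p.2))) mu0 :=
    Eventually.of_forall fun r =>
      ((hg₁c.comp (Real.continuous_cos.comp hsxc)).mul
        (hg₂c.comp (Real.continuous_cos.comp (hsyc r (Real.sqrt (1 - r ^ 2)))))).aestronglyMeasurable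
  have hF_int : Integrable (fun p : (ℝ × ℝ) × ℝ => g₁ (Real.cos (γ * p.1.1 + p.2)) *
      g₂ (Real.cos (γ * (ρ * p.1.1 + Real.sqrt (1 - ρ ^ 2) * p.1.2) + p.2))) mu0 :=
    integrable_of_bounded (C₁ * C₂)
      ((hg₁c.comp (Real.continuous_cos.comp hsxc)).mul
        (hg₂c.comp (Real.continuous_cos.comp (hsyc ρ (Real.sqrt (1 - ρ ^ 2))))))
      (fun p => habs _ _ _ _ (hC₁ _) (hC₂ _))
  have hF'_meas : AEStronglyMeasurable (F' ρ) mu0 := by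
    rw [hF'def]
    exact ((continuous_const.mul (c11.add (continuous_const.mul c12))).mul
      (hAc ρ (Real.sqrt (1 - ρ ^ 2)))).aestronglyMeasurable
  have hD := (hasDerivAt_integral_of_dominated_loc_of_deriv_le (Metric.ball_mem_nhds ρ hε) hF_meas hF_int hF'_meas
    (Eventually.of_forall h_bound) hboundint (Eventually.of_forall h_diff)).2
  -- Stein steps
  have hb2pos : 0 < 1 - ρ ^ 2 := by nlinarith
  have hBpos : 0 < Real.sqrt (1 - ρ ^ 2) := Real.sqrt_pos.mpr hb2pos
  have hBne : Real.sqrt (1 - ρ ^ 2) ≠ 0 := ne_of_gt hBpos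
  have hremapX : Continuous fun q : ℝ × (ℝ × ℝ) => ((q.1, q.2.1), q.2.2) :=
    (continuous_fst.prodMk (continuous_fst.comp continuous_snd)).prodMk
      (continuous_snd.comp continuous_snd)
  have hremapZ : Continuous fun q : ℝ × (ℝ × ℝ) => ((q.2.1, q.1), q.2.2) :=
    ((continuous_fst.comp continuous_snd).prodMk continuous_fst).prodMk
      (continuous_snd.comp continuous_snd)
  -- S1 : Stein in x
  have t1 : ∫ p, p.1.1 * Af γ ρ (Real.sqrt (1 - ρ ^ 2)) g₁ g₂ p ∂mu0
      = ∫ q : ℝ × (ℝ × ℝ), q.1 * Af γ ρ (Real.sqrt (1 - ρ ^ 2)) g₁ g₂ ((q.1, q.2.1), q.2.2)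
        ∂((gaussianReal 0 1).prod ((gaussianReal 0 1).prod uniform02pi)) :=
    eX_mp.integral_comp' (fun q => q.1 * Af γ ρ (Real.sqrt (1 - ρ ^ 2)) g₁ g₂ ((q.1, q.2.1), q.2.2))
  have hCX1 : ∀ (x : ℝ) (w : ℝ × ℝ), |Af γ ρ (Real.sqrt (1 - ρ ^ 2)) g₁ g₂ ((x, w.1), w.2)|
      ≤ C₁ * M₂ + (γ * (M₁ * M₂) + (γ * |ρ|) * (C₁ * (M₃ + M₂))) := by
    intro x w
    have h2 : 0 ≤ γ * (M₁ * M₂) + (γ * |ρ|) * (C₁ * (M₃ + M₂)) := by positivity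
    linarith [hAb ρ (Real.sqrt (1 - ρ ^ 2)) ((x, w.1), w.2)]
  have hCX2 : ∀ (x : ℝ) (w : ℝ × ℝ),
      |γ * Tf γ ρ (Real.sqrt (1 - ρ ^ 2)) g₁ g₂ ((x, w.1), w.2)
        + (γ * ρ) * Bf γ ρ (Real.sqrt (1 - ρ ^ 2)) g₁ g₂ ((x, w.1), w.2)|
      ≤ C₁ * M₂ + (γ * (M₁ * M₂) + (γ * |ρ|) * (C₁ * (M₃ + M₂))) := by
    intro x w
    have i1 : |γ * Tf γ ρ (Real.sqrt (1 - ρ ^ 2)) g₁ g₂ ((x, w.1), w.2)| ≤ γ * (M₁ * M₂) := by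
      rw [abs_mul, abs_of_pos hγ]
      exact mul_le_mul_of_nonneg_left (hTb _) hγ.le
    have i2 : |(γ * ρ) * Bf γ ρ (Real.sqrt (1 - ρ ^ 2)) g₁ g₂ ((x, w.1), w.2)|
        ≤ (γ * |ρ|) * (C₁ * (M₃ + M₂)) := by
      rw [abs_mul, abs_mul, abs_of_pos hγ]
      exact mul_le_mul_of_nonneg_left (hBb _) (by positivity)
    have := abs_add_le (γ * Tf γ ρ (Real.sqrt (1 - ρ ^ 2)) g₁ g₂ ((x, w.1), w.2))
      ((γ * ρ) * Bf γ ρ (Real.sqrt (1 - ρ ^ 2)) g₁ g₂ ((x, w.1), w.2))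
    have hcm : 0 ≤ C₁ * M₂ := by positivity
    linarith
  have t2 := stein_prod ((gaussianReal 0 1).prod uniform02pi)
    (fun x w => Af γ ρ (Real.sqrt (1 - ρ ^ 2)) g₁ g₂ ((x, w.1), w.2))
    (fun x w => γ * Tf γ ρ (Real.sqrt (1 - ρ ^ 2)) g₁ g₂ ((x, w.1), w.2)
      + (γ * ρ) * Bf γ ρ (Real.sqrt (1 - ρ ^ 2)) g₁ g₂ ((x, w.1), w.2))
    (C₁ * M₂ + (γ * (M₁ * M₂) + (γ * |ρ|) * (C₁ * (M₃ + M₂))))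
    ((hAc ρ (Real.sqrt (1 - ρ ^ 2))).comp hremapX)
    ((continuous_const.mul ((hTc ρ (Real.sqrt (1 - ρ ^ 2))).comp hremapX)).add
      (continuous_const.mul ((hBc ρ (Real.sqrt (1 - ρ ^ 2))).comp hremapX)))
    hCX1 hCX2
    (fun w x => hasDerivAt_hX γ ρ (Real.sqrt (1 - ρ ^ 2)) g₁ g₂ hg₁d hg₂'d w x)
  have t3 : ∫ q : ℝ × (ℝ × ℝ), (γ * Tf γ ρ (Real.sqrt (1 - ρ ^ 2)) g₁ g₂ ((q.1, q.2.1), q.2.2)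
        + (γ * ρ) * Bf γ ρ (Real.sqrt (1 - ρ ^ 2)) g₁ g₂ ((q.1, q.2.1), q.2.2))
        ∂((gaussianReal 0 1).prod ((gaussianReal 0 1).prod uniform02pi))
      = ∫ p, (γ * Tf γ ρ (Real.sqrt (1 - ρ ^ 2)) g₁ g₂ p
        + (γ * ρ) * Bf γ ρ (Real.sqrt (1 - ρ ^ 2)) g₁ g₂ p) ∂mu0 :=
    (eX_mp.integral_comp' (fun q => γ * Tf γ ρ (Real.sqrt (1 - ρ ^ 2)) g₁ g₂ ((q.1, q.2.1), q.2.2)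
      + (γ * ρ) * Bf γ ρ (Real.sqrt (1 - ρ ^ 2)) g₁ g₂ ((q.1, q.2.1), q.2.2))).symm
  have S1 := (t1.trans t2).trans t3
  -- S2 : Stein in z
  have u1 : ∫ p, p.1.2 * Af γ ρ (Real.sqrt (1 - ρ ^ 2)) g₁ g₂ p ∂mu0
      = ∫ q : ℝ × (ℝ × ℝ), q.1 * Af γ ρ (Real.sqrt (1 - ρ ^ 2)) g₁ g₂ ((q.2.1, q.1), q.2.2)
        ∂((gaussianReal 0 1).prod ((gaussianReal 0 1).prod uniform02pi)) :=
    eZ_mp.integral_comp' (fun q => q.1 * Af γ ρ (Real.sqrt (1 - ρ ^ 2)) g₁ g₂ ((q.2.1, q.1), q.2.2))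
  have hCZ1 : ∀ (z : ℝ) (w : ℝ × ℝ), |Af γ ρ (Real.sqrt (1 - ρ ^ 2)) g₁ g₂ ((w.1, z), w.2)|
      ≤ C₁ * M₂ + (γ * Real.sqrt (1 - ρ ^ 2)) * (C₁ * (M₃ + M₂)) := by
    intro z w
    have h2 : 0 ≤ (γ * Real.sqrt (1 - ρ ^ 2)) * (C₁ * (M₃ + M₂)) := by positivity
    linarith [hAb ρ (Real.sqrt (1 - ρ ^ 2)) ((w.1, z), w.2)]
  have hCZ2 : ∀ (z : ℝ) (w : ℝ × ℝ),
      |(γ * Real.sqrt (1 - ρ ^ 2)) * Bf γ ρ (Real.sqrt (1 - ρ ^ 2)) g₁ g₂ ((w.1, z), w.2)|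
      ≤ C₁ * M₂ + (γ * Real.sqrt (1 - ρ ^ 2)) * (C₁ * (M₃ + M₂)) := by
    intro z w
    have i2 : |(γ * Real.sqrt (1 - ρ ^ 2)) * Bf γ ρ (Real.sqrt (1 - ρ ^ 2)) g₁ g₂ ((w.1, z), w.2)|
        ≤ (γ * Real.sqrt (1 - ρ ^ 2)) * (C₁ * (M₃ + M₂)) := by
      rw [abs_mul, abs_of_pos (by positivity : (0:ℝ) < γ * Real.sqrt (1 - ρ ^ 2))]
      exact mul_le_mul_of_nonneg_left (hBb _) (by positivity)
    have hcm : 0 ≤ C₁ * M₂ := by positivity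
    linarith
  have u2 := stein_prod ((gaussianReal 0 1).prod uniform02pi)
    (fun z w => Af γ ρ (Real.sqrt (1 - ρ ^ 2)) g₁ g₂ ((w.1, z), w.2))
    (fun z w => (γ * Real.sqrt (1 - ρ ^ 2)) * Bf γ ρ (Real.sqrt (1 - ρ ^ 2)) g₁ g₂ ((w.1, z), w.2))
    (C₁ * M₂ + (γ * Real.sqrt (1 - ρ ^ 2)) * (C₁ * (M₃ + M₂)))
    ((hAc ρ (Real.sqrt (1 - ρ ^ 2))).comp hremapZ)
    (continuous_const.mul ((hBc ρ (Real.sqrt (1 - ρ ^ 2))).comp hremapZ))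
    hCZ1 hCZ2
    (fun w z => hasDerivAt_hZ γ ρ (Real.sqrt (1 - ρ ^ 2)) g₁ g₂ hg₂'d w z)
  have u3 : ∫ q : ℝ × (ℝ × ℝ),
        (γ * Real.sqrt (1 - ρ ^ 2)) * Bf γ ρ (Real.sqrt (1 - ρ ^ 2)) g₁ g₂ ((q.2.1, q.1), q.2.2)
        ∂((gaussianReal 0 1).prod ((gaussianReal 0 1).prod uniform02pi))
      = ∫ p, (γ * Real.sqrt (1 - ρ ^ 2)) * Bf γ ρ (Real.sqrt (1 - ρ ^ 2)) g₁ g₂ p ∂mu0 :=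
    (eZ_mp.integral_comp'
      (fun q => (γ * Real.sqrt (1 - ρ ^ 2)) * Bf γ ρ (Real.sqrt (1 - ρ ^ 2)) g₁ g₂ ((q.2.1, q.1), q.2.2))).symm
  have S2 := (u1.trans u2).trans u3
  -- integrability for splitting
  have intTf : Integrable (Tf γ ρ (Real.sqrt (1 - ρ ^ 2)) g₁ g₂) mu0 :=
    integrable_of_bounded (M₁ * M₂) (hTc ρ (Real.sqrt (1 - ρ ^ 2))) hTb
  have intBf : Integrable (Bf γ ρ (Real.sqrt (1 - ρ ^ 2)) g₁ g₂) mu0 :=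
    integrable_of_bounded (C₁ * (M₃ + M₂)) (hBc ρ (Real.sqrt (1 - ρ ^ 2))) hBb
  have intxA : Integrable (fun p : (ℝ × ℝ) × ℝ =>
      p.1.1 * Af γ ρ (Real.sqrt (1 - ρ ^ 2)) g₁ g₂ p) mu0 := by
    refine (int_abs_x.const_mul (C₁ * M₂)).mono'
      (c11.mul (hAc ρ (Real.sqrt (1 - ρ ^ 2)))).aestronglyMeasurable
      (Eventually.of_forall fun p => ?_)
    rw [Real.norm_eq_abs]
    calc |p.1.1 * Af γ ρ (Real.sqrt (1 - ρ ^ 2)) g₁ g₂ p|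
        = |p.1.1| * |Af γ ρ (Real.sqrt (1 - ρ ^ 2)) g₁ g₂ p| := abs_mul _ _
      _ ≤ |p.1.1| * (C₁ * M₂) := mul_le_mul_of_nonneg_left (hAb _ _ _) (abs_nonneg _)
      _ = C₁ * M₂ * |p.1.1| := by ring
  have intzA : Integrable (fun p : (ℝ × ℝ) × ℝ =>
      p.1.2 * Af γ ρ (Real.sqrt (1 - ρ ^ 2)) g₁ g₂ p) mu0 := by
    refine (int_abs_z.const_mul (C₁ * M₂)).mono'
      (c12.mul (hAc ρ (Real.sqrt (1 - ρ ^ 2)))).aestronglyMeasurable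
      (Eventually.of_forall fun p => ?_)
    rw [Real.norm_eq_abs]
    calc |p.1.2 * Af γ ρ (Real.sqrt (1 - ρ ^ 2)) g₁ g₂ p|
        = |p.1.2| * |Af γ ρ (Real.sqrt (1 - ρ ^ 2)) g₁ g₂ p| := abs_mul _ _
      _ ≤ |p.1.2| * (C₁ * M₂) := mul_le_mul_of_nonneg_left (hAb _ _ _) (abs_nonneg _)
      _ = C₁ * M₂ * |p.1.2| := by ring
  -- the key identity
  have key : ∫ p, F' ρ p ∂mu0 = γ ^ 2 * ∫ p, Tf γ ρ (Real.sqrt (1 - ρ ^ 2)) g₁ g₂ p ∂mu0 := by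
    have hsplit : ∀ p : (ℝ × ℝ) × ℝ, F' ρ p
        = γ * (p.1.1 * Af γ ρ (Real.sqrt (1 - ρ ^ 2)) g₁ g₂ p)
          + (γ * (-ρ / Real.sqrt (1 - ρ ^ 2))) * (p.1.2 * Af γ ρ (Real.sqrt (1 - ρ ^ 2)) g₁ g₂ p) := by
      intro p
      rw [hF'def]
      ring
    have e0 : ∫ p, F' ρ p ∂mu0
        = ∫ p, (γ * (p.1.1 * Af γ ρ (Real.sqrt (1 - ρ ^ 2)) g₁ g₂ p)
          + (γ * (-ρ / Real.sqrt (1 - ρ ^ 2))) * (p.1.2 * Af γ ρ (Real.sqrt (1 - ρ ^ 2)) g₁ g₂ p)) ∂mu0 :=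
      integral_congr_ae (Eventually.of_forall hsplit)
    have eS1 : ∫ p, (γ * Tf γ ρ (Real.sqrt (1 - ρ ^ 2)) g₁ g₂ p
        + (γ * ρ) * Bf γ ρ (Real.sqrt (1 - ρ ^ 2)) g₁ g₂ p) ∂mu0
        = γ * (∫ p, Tf γ ρ (Real.sqrt (1 - ρ ^ 2)) g₁ g₂ p ∂mu0)
          + (γ * ρ) * ∫ p, Bf γ ρ (Real.sqrt (1 - ρ ^ 2)) g₁ g₂ p ∂mu0 := by
      rw [integral_add (intTf.const_mul γ) (intBf.const_mul (γ * ρ)),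
        integral_const_mul, integral_const_mul]
    have eS2 : ∫ p, (γ * Real.sqrt (1 - ρ ^ 2)) * Bf γ ρ (Real.sqrt (1 - ρ ^ 2)) g₁ g₂ p ∂mu0
        = (γ * Real.sqrt (1 - ρ ^ 2)) * ∫ p, Bf γ ρ (Real.sqrt (1 - ρ ^ 2)) g₁ g₂ p ∂mu0 :=
      integral_const_mul _ _
    rw [e0, integral_add (intxA.const_mul γ)
      (intzA.const_mul (γ * (-ρ / Real.sqrt (1 - ρ ^ 2)))),
      integral_const_mul, integral_const_mul, S1, S2, eS1, eS2]
    field_simp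
    ring
  rw [key] at hD
  exact hD
end
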